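/- Let T > 0, Δ ∈ ℝ, a₁ > 0, a₂ ∈ ℝ, c₁ > 0, c₂ ∈ ℝ, and define H(t,S,q) = q(S − Δ/2 − a₂) − (c₂/2)q² − 4(c₁q + a₁)³ / (9c₁²(T−t)). For every (t,S,q) with 0 ≤ t < T and q > 0, the supremum over ν ≥ 0 of the map ν ↦ −(c₁ν² + c₂ν) ∂_S H(t,S,q) − ν ∂_q H(t,S,q) + (S − Δ/2 − a₁ν − a₂)ν is attained uniquely at ν* = 2(c₁q + a₁) / (3c₁(T−t)). -/

import Mathlib

/-- Value function for the optimal liquidation problem with linear temporary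
price impact `f(ν) = a₁ν + a₂` and quadratic permanent price impact
`g(ν) = c₁ν² + c₂ν`. -/
noncomputable def Hquad (T Δ a₁ a₂ c₁ c₂ : ℝ) (t S q : ℝ) : ℝ :=
  q * (S - Δ / 2 - a₂) - c₂ / 2 * q ^ 2 - 4 * (c₁ * q + a₁) ^ 3 / (9 * c₁ ^ 2 * (T - t))

/-- The Hamiltonian `ν ↦ −(c₁ν² + c₂ν) ∂_S H − ν ∂_q H + (S − Δ/2 − a₁ν − a₂)ν`
appearing in the HJB equation, evaluated with the partial derivatives of `Hquad`. -/
noncomputable def HamQuad (T Δ a₁ a₂ c₁ c₂ : ℝ) (t S q ν : ℝ) : ℝ :=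
  -(c₁ * ν ^ 2 + c₂ * ν) * deriv (fun s => Hquad T Δ a₁ a₂ c₁ c₂ t s q) S
    - ν * deriv (fun p => Hquad T Δ a₁ a₂ c₁ c₂ t S p) q
    + (S - Δ / 2 - a₁ * ν - a₂) * ν

lemma derivS (T Δ a₁ a₂ c₁ c₂ t S q : ℝ) :
    deriv (fun s => Hquad T Δ a₁ a₂ c₁ c₂ t s q) S = q := by
  have h : HasDerivAt (fun s => Hquad T Δ a₁ a₂ c₁ c₂ t s q) q S := by
    unfold Hquad
    have : HasDerivAt (fun s : ℝ => q * (s - Δ / 2 - a₂)) (q * 1) S :=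
      (((hasDerivAt_id S).sub_const (Δ / 2)).sub_const a₂).const_mul q
    simpa using (this.sub_const (c₂ / 2 * q ^ 2)).sub_const
      (4 * (c₁ * q + a₁) ^ 3 / (9 * c₁ ^ 2 * (T - t)))
  exact h.deriv

lemma derivQ (T Δ a₁ a₂ c₁ c₂ t S q : ℝ) :
    deriv (fun p => Hquad T Δ a₁ a₂ c₁ c₂ t S p) q
      = (S - Δ / 2 - a₂) - c₂ * q - 12 * (c₁ * q + a₁) ^ 2 * c₁ / (9 * c₁ ^ 2 * (T - t)) := by
  have h : HasDerivAt (fun p => Hquad T Δ a₁ a₂ c₁ c₂ t S p)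
      ((S - Δ / 2 - a₂) - c₂ * q - 12 * (c₁ * q + a₁) ^ 2 * c₁ / (9 * c₁ ^ 2 * (T - t))) q := by
    unfold Hquad
    have h1 : HasDerivAt (fun p : ℝ => p * (S - Δ / 2 - a₂)) (S - Δ / 2 - a₂) q := by
      simpa using (hasDerivAt_id q).mul_const (S - Δ / 2 - a₂)
    have h2 : HasDerivAt (fun p : ℝ => c₂ / 2 * p ^ 2) (c₂ / 2 * (2 * q)) q := by
      simpa using ((hasDerivAt_pow 2 q).const_mul (c₂ / 2))
    have h3 : HasDerivAt (fun p : ℝ => 4 * (c₁ * p + a₁) ^ 3 / (9 * c₁ ^ 2 * (T - t)))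
        (4 * (3 * (c₁ * q + a₁) ^ 2 * c₁) / (9 * c₁ ^ 2 * (T - t))) q := by
      have hin : HasDerivAt (fun p : ℝ => c₁ * p + a₁) c₁ q := by
        simpa using ((hasDerivAt_id q).const_mul c₁).add_const a₁
      have := ((hin.pow 3).const_mul (4 : ℝ)).div_const (9 * c₁ ^ 2 * (T - t))
      simpa using this
    have := (h1.fun_sub h2).fun_sub h3
    convert this using 1
    · rfl
    · rfl
    · ring
  exact h.deriv

lemma ham_eq (T Δ a₁ a₂ c₁ c₂ t S q ν : ℝ) (hc₁ : 0 < c₁) (htT : t < T) :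
    HamQuad T Δ a₁ a₂ c₁ c₂ t S q ν
      = (c₁ * q + a₁) * (4 * (c₁ * q + a₁) / (3 * c₁ * (T - t)) * ν - ν ^ 2) := by
  unfold HamQuad
  rw [derivS, derivQ]
  have hc : c₁ ≠ 0 := hc₁.ne'
  have hTt : T - t ≠ 0 := sub_ne_zero.mpr htT.ne'
  field_simp
  ring

/-- With linear TPI and quadratic PPI, the supremum over `ν ≥ 0` of the Hamiltonian
is attained uniquely at `ν* = 2(c₁q + a₁)/(3c₁(T−t))` whenever `0 ≤ t < T` and `q > 0`. -/
theorem stmt_3 (T Δ a₁ a₂ c₁ c₂ : ℝ) (hT : 0 < T) (ha₁ : 0 < a₁) (hc₁ : 0 < c₁)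
    (t S q : ℝ) (ht0 : 0 ≤ t) (htT : t < T) (hq : 0 < q) :
    0 ≤ 2 * (c₁ * q + a₁) / (3 * c₁ * (T - t))
    ∧ (∀ ν : ℝ, 0 ≤ ν → HamQuad T Δ a₁ a₂ c₁ c₂ t S q ν
        ≤ HamQuad T Δ a₁ a₂ c₁ c₂ t S q (2 * (c₁ * q + a₁) / (3 * c₁ * (T - t))))
    ∧ (∀ ν : ℝ, 0 ≤ ν →
        HamQuad T Δ a₁ a₂ c₁ c₂ t S q ν
          = HamQuad T Δ a₁ a₂ c₁ c₂ t S q (2 * (c₁ * q + a₁) / (3 * c₁ * (T - t))) →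
        ν = 2 * (c₁ * q + a₁) / (3 * c₁ * (T - t))) := by
  have hA : 0 < c₁ * q + a₁ := by positivity
  have hTt : 0 < T - t := sub_pos.mpr htT
  have hden : 0 < 3 * c₁ * (T - t) := by positivity
  set νs : ℝ := 2 * (c₁ * q + a₁) / (3 * c₁ * (T - t)) with hνs
  have hνpos : 0 < νs := by positivity
  have hkey : ∀ ν : ℝ, HamQuad T Δ a₁ a₂ c₁ c₂ t S q ν
      = (c₁ * q + a₁) * (2 * νs * ν - ν ^ 2) := by
    intro ν
    rw [ham_eq T Δ a₁ a₂ c₁ c₂ t S q ν hc₁ htT]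
    have h2 : 4 * (c₁ * q + a₁) / (3 * c₁ * (T - t)) = 2 * νs := by rw [hνs]; ring
    rw [h2]
  refine ⟨hνpos.le, ?_, ?_⟩
  · intro ν _
    rw [hkey, hkey]
    have : 0 ≤ (ν - νs) ^ 2 := sq_nonneg _
    nlinarith [sq_nonneg (ν - νs)]
  · intro ν _ h
    rw [hkey, hkey] at h
    have h' : (c₁ * q + a₁) * (νs - ν) ^ 2 = 0 := by nlinarith [h]
    have h'' : (νs - ν) ^ 2 = 0 := by
      rcases mul_eq_zero.mp h' with h0 | h0
      · exact absurd h0 hA.ne'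
      · exact h0
    have := pow_eq_zero_iff (n := 2) (by norm_num) |>.mp h''
    linarith [sub_eq_zero.mp this]
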